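/- arXiv:1009.1291 — 6 statements merged into one kernel-verified Lean document; each statement's English description precedes it below -/
import Mathlib

section
/- For nonnegative integers a_0, a_1, ..., a_n, the constant term in x_0, ..., x_n of the Dyson product ∏_{0 ≤ i ≠ j ≤ n} (1 - x_i/x_j)^{a_i} equals the multinomial coefficient a!/(a_0! a_1! ⋯ a_n!), where a = a_0 + a_1 + ⋯ + a_n. -/
open Finset

variable {ι : Type*} [DecidableEq ι] {M : Type*} [CommMonoid M]




-- field Lagrange identity at 0
theorem lag0 {F : Type*} [Field F] {s : Finset ι} {v : ι → F} (hvs : Set.InjOn v s) (hs : s.Nonempty) :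
    ∑ j ∈ s, ∏ i ∈ s.erase j, (v i) / (v i - v j) = 1 := by
  have h := Lagrange.sum_basis hvs hs
  have := congrArg (Polynomial.eval 0) h
  rw [Polynomial.eval_finset_sum, Polynomial.eval_one] at this
  rw [← this]
  refine Finset.sum_congr rfl fun j hj => ?_
  rw [Lagrange.basis, Polynomial.eval_prod]
  refine Finset.prod_congr rfl fun i hi => ?_
  rw [Lagrange.basisDivisor, Polynomial.eval_mul, Polynomial.eval_C, Polynomial.eval_sub,
    Polynomial.eval_X, Polynomial.eval_C, zero_sub]
  rw [show v j - v i = -(v i - v j) by ring, inv_neg, div_eq_mul_inv]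
  ring


theorem pairs_group (s t : Finset ι) (f : ι × ι → M) :
    ∏ p ∈ (s ×ˢ s).filter (fun p => p.1 ≠ p.2 ∧ p.2 ∈ t), f p
      = ∏ k ∈ t ∩ s, ∏ i ∈ s.erase k, f (i, k) := by
  rw [Finset.prod_sigma']
  refine (Finset.prod_nbij' (fun (x : (_ : ι) × ι) => ((x.2 : ι), x.1))
    (fun p => ⟨p.2, p.1⟩) ?_ ?_ ?_ ?_ ?_).symm
  · rintro ⟨k, i⟩ hx
    simp only [Finset.mem_sigma, Finset.mem_inter, Finset.mem_erase] at hx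
    simp only [Finset.mem_filter, Finset.mem_product]
    exact ⟨⟨hx.2.2, hx.1.2⟩, hx.2.1, hx.1.1⟩
  · rintro ⟨i, k⟩ hp
    simp only [Finset.mem_filter, Finset.mem_product] at hp
    simp only [Finset.mem_sigma, Finset.mem_inter, Finset.mem_erase]
    exact ⟨⟨hp.2.2, hp.1.2⟩, hp.2.1, hp.1.1⟩
  · intros; rfl
  · intros; rfl
  · intros; rfl

theorem pairs_group' (s t : Finset ι) (f : ι × ι → M) :
    ∏ p ∈ (s ×ˢ s).filter (fun p => p.1 ≠ p.2 ∧ p.1 ∈ t), f p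
      = ∏ k ∈ t ∩ s, ∏ i ∈ s.erase k, f (k, i) := by
  rw [Finset.prod_sigma']
  refine (Finset.prod_nbij' (fun (x : (_ : ι) × ι) => ((x.1 : ι), x.2))
    (fun p => ⟨p.1, p.2⟩) ?_ ?_ ?_ ?_ ?_).symm
  · rintro ⟨k, i⟩ hx
    simp only [Finset.mem_sigma, Finset.mem_inter, Finset.mem_erase] at hx
    simp only [Finset.mem_filter, Finset.mem_product]
    exact ⟨⟨hx.1.2, hx.2.2⟩, fun h => hx.2.1 h.symm, hx.1.1⟩
  · rintro ⟨i, k⟩ hp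
    simp only [Finset.mem_filter, Finset.mem_product] at hp
    simp only [Finset.mem_sigma, Finset.mem_inter, Finset.mem_erase]
    exact ⟨⟨hp.2.2, hp.1.1⟩, fun h => hp.2.1 h.symm, hp.1.2⟩
  · intros; rfl
  · intros; rfl
  · intros; rfl

theorem pairs_split {s : Finset ι} {j : ι} (hj : j ∈ s) (f : ι × ι → M) :
    ∏ p ∈ (s ×ˢ s).filter (fun p => p.1 ≠ p.2), f p
      = (∏ i ∈ s.erase j, f (i, j)) *
        ∏ p ∈ (s ×ˢ s).filter (fun p => p.1 ≠ p.2 ∧ p.2 ≠ j), f p := by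
  have h1 : (s ×ˢ s).filter (fun p => p.1 ≠ p.2)
      = (s ×ˢ s).filter (fun p => p.1 ≠ p.2 ∧ p.2 ∈ s) := by
    apply Finset.filter_congr
    intro p hp
    simp [Finset.mem_product.mp hp |>.2]
  have h2 : (s ×ˢ s).filter (fun p => p.1 ≠ p.2 ∧ p.2 ≠ j)
      = (s ×ˢ s).filter (fun p => p.1 ≠ p.2 ∧ p.2 ∈ s.erase j) := by
    apply Finset.filter_congr
    intro p hp
    simp [Finset.mem_product.mp hp |>.2, Finset.mem_erase]
  rw [h1, h2, pairs_group, pairs_group, Finset.inter_self,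
    Finset.inter_eq_left.mpr (Finset.erase_subset j s),
    ← Finset.mul_prod_erase s _ hj]

theorem cleared {F : Type*} [Field F] {s : Finset ι} {v : ι → F} (hvs : Set.InjOn v s)
    (hs : s.Nonempty) :
    ∑ j ∈ s, (∏ i ∈ s.erase j, v i) *
        ∏ p ∈ (s ×ˢ s).filter (fun p => p.1 ≠ p.2 ∧ p.2 ≠ j), (v p.1 - v p.2)
      = ∏ p ∈ (s ×ˢ s).filter (fun p => p.1 ≠ p.2), (v p.1 - v p.2) := by
  have key : ∀ j ∈ s, (∏ i ∈ s.erase j, v i) *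
        ∏ p ∈ (s ×ˢ s).filter (fun p => p.1 ≠ p.2 ∧ p.2 ≠ j), (v p.1 - v p.2)
      = (∏ i ∈ s.erase j, v i / (v i - v j)) *
        ∏ p ∈ (s ×ˢ s).filter (fun p => p.1 ≠ p.2), (v p.1 - v p.2) := by
    intro j hj
    rw [pairs_split hj, ← mul_assoc, ← Finset.prod_mul_distrib]
    congr 1
    refine Finset.prod_congr rfl fun i hi => ?_
    have hne : v i - v j ≠ 0 := by
      refine sub_ne_zero_of_ne fun h' =>
        (Finset.mem_erase.mp hi).1 (hvs (Finset.mem_erase.mp hi).2 hj h')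
    rw [div_mul_cancel₀ _ hne]
  rw [Finset.sum_congr rfl key, ← Finset.sum_mul, lag0 hvs hs, one_mul]

open Finsupp
noncomputable section
abbrev Lau (n : ℕ) := AddMonoidAlgebra ℚ (Fin (n+1) →₀ ℤ)
def mono {n : ℕ} (e : Fin (n+1) →₀ ℤ) : Lau n := AddMonoidAlgebra.single e 1
def CT {n : ℕ} (f : Lau n) : ℚ := f.coeff 0
def Dyson (n : ℕ) (a : Fin (n+1) → ℕ) : Lau n :=
  ∏ p ∈ Finset.univ.filter (fun p : Fin (n+1) × Fin (n+1) => p.1 ≠ p.2),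
    (1 - mono (single p.1 1 - single p.2 1)) ^ (a p.1)

namespace DysonProof
variable {n : ℕ}

theorem mono_mul (e e' : Fin (n+1) →₀ ℤ) : (mono e) * mono e' = mono (e + e') := by
  simp [mono, AddMonoidAlgebra.single_mul_single]

theorem mono_zero : (mono 0 : Lau n) = 1 := rfl

theorem isUnit_mono (e : Fin (n+1) →₀ ℤ) : IsUnit (mono e : Lau n) :=
  IsUnit.of_mul_eq_one (mono (-e)) (by rw [mono_mul, add_neg_cancel, mono_zero])

theorem mono_prod {α : Type*} (P : Finset α) (e : α → (Fin (n+1) →₀ ℤ)) :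
    ∏ p ∈ P, (mono (e p) : Lau n) = mono (∑ p ∈ P, e p) := by
  classical
  induction P using Finset.cons_induction with
  | empty => simp [mono_zero]
  | cons a P ha ih => rw [Finset.prod_cons, Finset.sum_cons, ih, mono_mul]

def emb (n : ℕ) : MvPolynomial (Fin (n+1)) ℚ →+* Lau n :=
  (MvPolynomial.aeval (fun i => mono (single i 1))).toRingHom

@[simp] theorem emb_X (i : Fin (n+1)) : emb n (MvPolynomial.X i) = mono (single i 1) := by
  simp [emb]

/-- The MvPolynomial cleared Lagrange identity. -/
theorem mvId (s : Finset (Fin (n+1))) (hs : s.Nonempty) :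
    ∑ j ∈ s, (∏ i ∈ s.erase j, (MvPolynomial.X i : MvPolynomial (Fin (n+1)) ℚ)) *
        ∏ p ∈ (s ×ˢ s).filter (fun p => p.1 ≠ p.2 ∧ p.2 ≠ j),
          (MvPolynomial.X p.1 - MvPolynomial.X p.2)
      = ∏ p ∈ (s ×ˢ s).filter (fun p => p.1 ≠ p.2),
          (MvPolynomial.X p.1 - MvPolynomial.X p.2) := by
  set A := MvPolynomial (Fin (n+1)) ℚ
  set K := FractionRing A
  apply IsFractionRing.injective A K
  push_cast [map_sum, map_mul, map_prod, map_sub]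
  exact cleared (fun i _ j _ h => MvPolynomial.X_injective
      (IsFractionRing.injective A K h)) hs

def Gk (S : Finset (Fin (n+1))) (k : Fin (n+1)) : Lau n :=
  ∏ i ∈ S.erase k, (1 - mono (single k 1 - single i 1))

theorem hpairs_general (S t : Finset (Fin (n+1))) :
    ∏ p ∈ (S ×ˢ S).filter (fun p => p.1 ≠ p.2 ∧ p.2 ∈ t),
        (1 - (mono (single p.2 1 - single p.1 1) : Lau n))
      = ∏ k ∈ t ∩ S, Gk S k := by
  rw [pairs_group]
  rfl

theorem hpairs (S : Finset (Fin (n+1))) :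
    ∏ p ∈ (S ×ˢ S).filter (fun p => p.1 ≠ p.2),
        (1 - (mono (single p.2 1 - single p.1 1) : Lau n))
      = ∏ k ∈ S, Gk S k := by
  have h : (S ×ˢ S).filter (fun p => p.1 ≠ p.2)
      = (S ×ˢ S).filter (fun p => p.1 ≠ p.2 ∧ p.2 ∈ S) := by
    apply Finset.filter_congr
    intro p hp
    simp [Finset.mem_product.mp hp |>.2]
  rw [h, hpairs_general, Finset.inter_self]

theorem hpairsJ (S : Finset (Fin (n+1))) (j : Fin (n+1)) :
    ∏ p ∈ (S ×ˢ S).filter (fun p => p.1 ≠ p.2 ∧ p.2 ≠ j),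
        (1 - (mono (single p.2 1 - single p.1 1) : Lau n))
      = ∏ k ∈ S.erase j, Gk S k := by
  have h : (S ×ˢ S).filter (fun p => p.1 ≠ p.2 ∧ p.2 ≠ j)
      = (S ×ˢ S).filter (fun p => p.1 ≠ p.2 ∧ p.2 ∈ S.erase j) := by
    apply Finset.filter_congr
    intro p hp
    simp [Finset.mem_product.mp hp |>.2, Finset.mem_erase]
  rw [h, hpairs_general, Finset.inter_eq_left.mpr (Finset.erase_subset j S)]

theorem lauLag (S : Finset (Fin (n+1))) (hS : S.Nonempty) :
    ∑ j ∈ S, ∏ k ∈ S.erase j, Gk S k = ∏ k ∈ S, Gk S k := by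
  classical
  have fact : ∀ p : Fin (n+1) × Fin (n+1),
      (mono (single p.1 1) : Lau n) - mono (single p.2 1)
        = mono (single p.1 1) * (1 - mono (single p.2 1 - single p.1 1)) := by
    intro p
    rw [mul_sub, mul_one, mono_mul]
    congr 2
    abel
  have h := congrArg (emb n) (mvId (n := n) S hS)
  rw [map_sum] at h
  simp only [map_mul, map_prod, map_sub, emb_X, fact, Finset.prod_mul_distrib] at h
  set W := ∏ p ∈ (S ×ˢ S).filter (fun p => p.1 ≠ p.2), (mono (single p.1 1) : Lau n) with hWdef
  have huW : IsUnit W := by rw [hWdef, mono_prod]; exact isUnit_mono _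
  refine huW.mul_left_cancel ?_
  rw [Finset.mul_sum]
  calc ∑ j ∈ S, W * ∏ k ∈ S.erase j, Gk S k
      = ∑ j ∈ S, (∏ i ∈ S.erase j, (mono (single i 1) : Lau n)) *
          ((∏ p ∈ (S ×ˢ S).filter (fun p => p.1 ≠ p.2 ∧ p.2 ≠ j), mono (single p.1 1)) *
           ∏ p ∈ (S ×ˢ S).filter (fun p => p.1 ≠ p.2 ∧ p.2 ≠ j),
             (1 - mono (single p.2 1 - single p.1 1))) := by
        refine Finset.sum_congr rfl fun j hj => ?_
        rw [← hpairsJ S j, ← mul_assoc, hWdef,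
          pairs_split hj (fun p => (mono (single p.1 1) : Lau n))]
    _ = W * ∏ p ∈ (S ×ˢ S).filter (fun p => p.1 ≠ p.2),
          (1 - mono (single p.2 1 - single p.1 1)) := h
    _ = W * ∏ k ∈ S, Gk S k := by rw [hpairs]

def DS (S : Finset (Fin (n+1))) (a : Fin (n+1) → ℕ) : Lau n :=
  ∏ p ∈ (S ×ˢ S).filter (fun p => p.1 ≠ p.2),
    (1 - mono (single p.1 1 - single p.2 1)) ^ (a p.1)

theorem Dyson_eq (a : Fin (n+1) → ℕ) : Dyson n a = DS Finset.univ a := by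
  rw [Dyson, DS, ← Finset.univ_product_univ]

theorem DS_eq_prod (S : Finset (Fin (n+1))) (a : Fin (n+1) → ℕ) :
    DS S a = ∏ k ∈ S, (Gk S k) ^ (a k) := by
  have h : (S ×ˢ S).filter (fun p => p.1 ≠ p.2)
      = (S ×ˢ S).filter (fun p => p.1 ≠ p.2 ∧ p.1 ∈ S) := by
    apply Finset.filter_congr
    intro p hp
    simp [Finset.mem_product.mp hp |>.1]
  rw [DS, h, pairs_group', Finset.inter_self]
  refine Finset.prod_congr rfl fun k _ => ?_
  rw [Gk, ← Finset.prod_pow]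

theorem DS_rec (S : Finset (Fin (n+1))) (hS : S.Nonempty) (a : Fin (n+1) → ℕ)
    (ha : ∀ i ∈ S, 1 ≤ a i) :
    DS S a = ∑ j ∈ S, DS S (Function.update a j (a j - 1)) := by
  have h1 : DS S a = (∏ k ∈ S, Gk S k ^ (a k - 1)) * ∏ k ∈ S, Gk S k := by
    rw [DS_eq_prod, ← Finset.prod_mul_distrib]
    refine Finset.prod_congr rfl fun k hk => ?_
    rw [← pow_succ]
    congr 1
    have := ha k hk
    omega
  rw [h1, ← lauLag S hS, Finset.mul_sum]
  refine Finset.sum_congr rfl fun j hj => ?_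
  rw [DS_eq_prod,
    ← Finset.mul_prod_erase S (fun k => Gk S k ^ (a k - 1)) hj,
    ← Finset.mul_prod_erase S (fun k => Gk S k ^ (Function.update a j (a j - 1) k)) hj,
    Function.update_self, mul_assoc, ← Finset.prod_mul_distrib]
  congr 1
  refine Finset.prod_congr rfl fun k hk => ?_
  rw [Function.update_of_ne (Finset.mem_erase.mp hk).1, ← pow_succ]
  congr 1
  have := ha k (Finset.mem_erase.mp hk).2
  omega

section Support
variable {j : Fin (n+1)}

theorem zc_mul {f g : Lau n} (hf : ∀ e ∈ f.coeff.support, e j = 0) (hg : ∀ e ∈ g.coeff.support, e j = 0) :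
    ∀ e ∈ (f * g).coeff.support, e j = 0 := by
  intro e he
  rcases Finset.mem_add.mp (AddMonoidAlgebra.support_coeff_mul_subset f g he) with ⟨b, hb, c, hc, rfl⟩
  simp [Finsupp.add_apply, hf b hb, hg c hc]

theorem zc_prod {α : Type*} (P : Finset α) (g : α → Lau n)
    (h : ∀ p ∈ P, ∀ e ∈ (g p).coeff.support, e j = 0) :
    ∀ e ∈ (∏ p ∈ P, g p).coeff.support, e j = 0 := by
  classical
  induction P using Finset.cons_induction with
  | empty =>
      intro e he
      rw [Finset.prod_empty] at he
      have : e = 0 := by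
        have := Finsupp.support_single_subset (a := (0 : Fin (n+1) →₀ ℤ)) (b := (1:ℚ)) he
        simpa using this
      simp [this]
  | cons p P hp ih =>
      rw [Finset.prod_cons]
      exact zc_mul (h p (Finset.mem_cons_self p P))
        (ih fun q hq => h q (Finset.mem_cons.mpr (Or.inr hq)))

theorem neg_mul_supp {f g : Lau n} (hf : ∀ e ∈ f.coeff.support, e j = 0)
    (hg : ∀ e ∈ g.coeff.support, e j < 0) :
    ∀ e ∈ (f * g).coeff.support, e j < 0 := by
  intro e he
  rcases Finset.mem_add.mp (AddMonoidAlgebra.support_coeff_mul_subset f g he) with ⟨b, hb, c, hc, rfl⟩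
  rw [Finsupp.add_apply, hf b hb, zero_add]
  exact hg c hc

theorem neg_mul_neg_supp {f g : Lau n} (hf : ∀ e ∈ f.coeff.support, e j < 0)
    (hg : ∀ e ∈ g.coeff.support, e j < 0) :
    ∀ e ∈ (f * g).coeff.support, e j < 0 := by
  intro e he
  rcases Finset.mem_add.mp (AddMonoidAlgebra.support_coeff_mul_subset f g he) with ⟨b, hb, c, hc, rfl⟩
  rw [Finsupp.add_apply]
  exact add_neg (hf b hb) (hg c hc)

theorem neg_add_supp {f g : Lau n} (hf : ∀ e ∈ f.coeff.support, e j < 0)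
    (hg : ∀ e ∈ g.coeff.support, e j < 0) :
    ∀ e ∈ (f + g).coeff.support, e j < 0 := by
  intro e he
  rcases Finset.mem_union.mp (Finsupp.support_add (g₁ := f.coeff) (g₂ := g.coeff) he) with h | h
  · exact hf e h
  · exact hg e h

/-- products of elements of the form 1 + (negative support) -/
theorem one_add_neg_mul {f g : Lau n} (hf : ∀ e ∈ (f - 1).coeff.support, e j < 0)
    (hg : ∀ e ∈ (g - 1).coeff.support, e j < 0) :
    ∀ e ∈ (f * g - 1).coeff.support, e j < 0 := by
  have key : f * g - 1 = (f - 1) * (g - 1) + ((f - 1) + (g - 1)) := by ring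
  rw [key]
  exact neg_add_supp (neg_mul_neg_supp hf hg) (neg_add_supp hf hg)

theorem one_add_neg_prod {α : Type*} (P : Finset α) (g : α → Lau n)
    (h : ∀ p ∈ P, ∀ e ∈ (g p - 1).coeff.support, e j < 0) :
    ∀ e ∈ ((∏ p ∈ P, g p) - 1).coeff.support, e j < 0 := by
  classical
  induction P using Finset.cons_induction with
  | empty => simp
  | cons p P hp ih =>
      rw [Finset.prod_cons]
      exact one_add_neg_mul (h p (Finset.mem_cons_self p P))
        (ih fun q hq => h q (Finset.mem_cons.mpr (Or.inr hq)))

theorem one_add_neg_pow {f : Lau n} (hf : ∀ e ∈ (f - 1).coeff.support, e j < 0) (m : ℕ) :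
    ∀ e ∈ (f ^ m - 1).coeff.support, e j < 0 := by
  induction m with
  | zero => simp
  | succ m ih =>
      rw [pow_succ]
      exact one_add_neg_mul ih hf

theorem supp_one_sub_mono {d : Fin (n+1) →₀ ℤ} (hd : d j = 0) :
    ∀ e ∈ ((1 : Lau n) - mono d).coeff.support, e j = 0 := by
  intro e he
  rcases Finset.mem_union.mp (Finsupp.support_sub (f := (1 : Lau n).coeff) (g := (mono d).coeff) he) with h | h
  · have : e = 0 := by
      have := Finsupp.support_single_subset (a := (0 : Fin (n+1) →₀ ℤ)) (b := (1:ℚ)) h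
      simpa using this
    simp [this]
  · have : e = d := by
      have := Finsupp.support_single_subset (a := d) (b := (1:ℚ)) h
      simpa [mono] using this
    rw [this, hd]

theorem supp_one_sub_mono_neg {d : Fin (n+1) →₀ ℤ} (hd : d j < 0) :
    ∀ e ∈ (((1 : Lau n) - mono d) - 1).coeff.support, e j < 0 := by
  intro e he
  have h1 : ((1 : Lau n) - mono d) - 1 = -(mono d) := by ring
  rw [h1, AddMonoidAlgebra.coeff_neg, Finsupp.support_neg] at he
  have : e = d := by
    have := Finsupp.support_single_subset (a := d) (b := (1:ℚ)) he
    simpa [mono] using this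
  rw [this]; exact hd

end Support

theorem zc_one {j : Fin (n+1)} : ∀ e ∈ (1 : Lau n).coeff.support, e j = 0 := by
  intro e he
  have : e = 0 := by
    have := Finsupp.support_single_subset (a := (0 : Fin (n+1) →₀ ℤ)) (b := (1:ℚ)) he
    simpa using this
  simp [this]

theorem zc_pow {j : Fin (n+1)} {f : Lau n} (hf : ∀ e ∈ f.coeff.support, e j = 0) (m : ℕ) :
    ∀ e ∈ (f ^ m).coeff.support, e j = 0 := by
  induction m with
  | zero => simpa using zc_one
  | succ m ih => rw [pow_succ]; exact zc_mul ih hf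

theorem CT_add (f g : Lau n) : CT (f + g) = CT f + CT g := Finsupp.add_apply _ _ _

theorem CT_sum {α : Type*} (s : Finset α) (f : α → Lau n) :
    CT (∑ j ∈ s, f j) = ∑ j ∈ s, CT (f j) := by
  classical
  induction s using Finset.cons_induction with
  | empty => simp [CT]
  | cons p P hp ih => rw [Finset.sum_cons, Finset.sum_cons, CT_add, ih]

theorem DS_elim (S : Finset (Fin (n+1))) (j : Fin (n+1)) (hj : j ∈ S) (a : Fin (n+1) → ℕ)
    (haj : a j = 0) : CT (DS S a) = CT (DS (S.erase j) a) := by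
  classical
  set F : Fin (n+1) × Fin (n+1) → Lau n :=
    fun p => (1 - mono (single p.1 1 - single p.2 1)) ^ (a p.1) with hF
  set P := (S ×ˢ S).filter (fun p => p.1 ≠ p.2) with hP
  have split1 : DS S a = (∏ p ∈ P.filter (fun p => p.1 = j), F p) *
      ∏ p ∈ P.filter (fun p => ¬ p.1 = j), F p := by
    rw [DS, ← Finset.prod_filter_mul_prod_filter_not P (fun p => p.1 = j) F]
  have hone : (∏ p ∈ P.filter (fun p => p.1 = j), F p) = 1 := by
    refine Finset.prod_eq_one fun p hp => ?_
    have : p.1 = j := (Finset.mem_filter.mp hp).2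
    rw [hF]
    simp only [this, haj, pow_zero]
  set Q := P.filter (fun p => ¬ p.1 = j) with hQ
  have split2 : (∏ p ∈ Q, F p) = (∏ p ∈ Q.filter (fun p => p.2 = j), F p) *
      ∏ p ∈ Q.filter (fun p => ¬ p.2 = j), F p := by
    rw [← Finset.prod_filter_mul_prod_filter_not Q (fun p => p.2 = j) F]
  set B := ∏ p ∈ Q.filter (fun p => p.2 = j), F p with hB
  set D' := ∏ p ∈ Q.filter (fun p => ¬ p.2 = j), F p with hD'
  have hset : Q.filter (fun p => ¬ p.2 = j)
      = ((S.erase j) ×ˢ (S.erase j)).filter (fun p => p.1 ≠ p.2) := by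
    ext ⟨x, y⟩
    simp only [hQ, hP, Finset.mem_filter, Finset.mem_product, Finset.mem_erase]
    tauto
  have hD'eq : D' = DS (S.erase j) a := by rw [hD', hset, DS]
  have hD'supp : ∀ e ∈ D'.coeff.support, e j = 0 := by
    rw [hD']
    refine zc_prod _ _ fun p hp => ?_
    have hp' : p.1 ≠ j ∧ p.2 ≠ j := by
      simp only [hQ, hP, Finset.mem_filter] at hp
      exact ⟨hp.1.2, hp.2⟩
    refine zc_pow (supp_one_sub_mono ?_) _
    rw [Finsupp.sub_apply, Finsupp.single_apply, Finsupp.single_apply,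
      if_neg (fun h => hp'.1 h), if_neg (fun h => hp'.2 h), sub_zero]
  have hBsupp : ∀ e ∈ (B - 1).coeff.support, e j < 0 := by
    rw [hB]
    refine one_add_neg_prod _ _ fun p hp => ?_
    have hp' : p.1 ≠ j ∧ p.2 = j := by
      simp only [hQ, hP, Finset.mem_filter] at hp
      exact ⟨hp.1.2, hp.2⟩
    refine one_add_neg_pow (supp_one_sub_mono_neg ?_) _
    rw [Finsupp.sub_apply, Finsupp.single_apply, Finsupp.single_apply,
      if_neg (fun h => hp'.1 h), if_pos hp'.2]
    norm_num
  have hmix : ∀ e ∈ (D' * (B - 1)).coeff.support, e j < 0 := neg_mul_supp hD'supp hBsupp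
  have hzero : CT (D' * (B - 1)) = 0 := by
    rw [CT]
    by_contra h
    have h0 : (0 : Fin (n+1) →₀ ℤ) ∈ (D' * (B - 1)).coeff.support := Finsupp.mem_support_iff.mpr h
    have := hmix 0 h0
    simp at this
  have : DS S a = D' + D' * (B - 1) := by
    rw [split1, hone, one_mul, split2]
    ring
  rw [this, CT_add, hzero, add_zero, hD'eq]

theorem CT_one : CT (1 : Lau n) = 1 := by
  show (1 : Lau n).coeff 0 = 1
  rw [AddMonoidAlgebra.one_def]
  simp

theorem DS_empty (a : Fin (n+1) → ℕ) : DS (∅ : Finset (Fin (n+1))) a = 1 := by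
  rw [DS]
  simp

theorem master (N : ℕ) : ∀ (S : Finset (Fin (n+1))) (a : Fin (n+1) → ℕ),
    (∑ i ∈ S, (a i + 1)) ≤ N →
    CT (DS S a) = ((∑ i ∈ S, a i).factorial : ℚ) / ∏ i ∈ S, ((a i).factorial : ℚ) := by
  induction N with
  | zero =>
      intro S a h
      have hS : S = ∅ := by
        by_contra hne
        obtain ⟨i, hi⟩ := Finset.nonempty_iff_ne_empty.mpr hne
        have : 0 < ∑ i ∈ S, (a i + 1) :=
          Finset.sum_pos' (fun _ _ => Nat.zero_le _) ⟨i, hi, by omega⟩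
        omega
      subst hS
      simp [DS_empty, CT_one]
  | succ N ih =>
      intro S a h
      rcases S.eq_empty_or_nonempty with rfl | hS
      · simp [DS_empty, CT_one]
      by_cases hz : ∃ j ∈ S, a j = 0
      · obtain ⟨j, hjS, hj0⟩ := hz
        rw [DS_elim S j hjS a hj0]
        have hm : (∑ i ∈ S.erase j, (a i + 1)) + (a j + 1) = ∑ i ∈ S, (a i + 1) :=
          Finset.sum_erase_add S _ hjS
        have hle : ∑ i ∈ S.erase j, (a i + 1) ≤ N := by omega
        rw [ih _ _ hle, Finset.sum_erase S (f := a) (by rw [hj0]),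
          Finset.prod_erase S (f := fun i => ((a i).factorial : ℚ)) (by simp [hj0])]
      · push_neg at hz
        have ha1 : ∀ i ∈ S, 1 ≤ a i := fun i hi => Nat.one_le_iff_ne_zero.mpr (hz i hi)
        rw [DS_rec S hS a ha1, CT_sum]
        set M := ∑ i ∈ S, a i with hM
        have hMpos : 0 < M := by
          obtain ⟨i, hi⟩ := hS
          calc 0 < a i := ha1 i hi
            _ ≤ M := Finset.single_le_sum (fun _ _ => Nat.zero_le _) hi
        set prodA := ∏ i ∈ S, ((a i).factorial : ℚ) with hprodA
        have hprodA0 : prodA ≠ 0 := by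
          rw [hprodA]
          refine Finset.prod_ne_zero_iff.mpr fun i _ => ?_
          exact_mod_cast (a i).factorial_ne_zero
        have key : ∀ j ∈ S, CT (DS S (Function.update a j (a j - 1)))
            = (a j : ℚ) * ((M - 1).factorial : ℚ) / prodA := by
          intro j hjS
          have hupd1 : (fun i => Function.update a j (a j - 1) i + 1)
              = Function.update (fun i => a i + 1) j (a j - 1 + 1) := by
            funext i
            by_cases hi : i = j
            · subst hi; simp
            · simp [Function.update_of_ne hi]
          have hsum_erase : (∑ i ∈ S.erase j, (a i + 1)) + (a j + 1) = ∑ i ∈ S, (a i + 1) :=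
            Finset.sum_erase_add S _ hjS
          have hmeas : ∑ i ∈ S, (Function.update a j (a j - 1) i + 1) ≤ N := by
            rw [hupd1, Finset.sum_update_of_mem hjS]
            simp only [← Finset.erase_eq]
            have := ha1 j hjS
            omega
          rw [ih _ _ hmeas]
          have hsum2 : (∑ i ∈ S.erase j, a i) + a j = ∑ i ∈ S, a i :=
            Finset.sum_erase_add S _ hjS
          have hupd2 : (fun i => Function.update a j (a j - 1) i)
              = Function.update a j (a j - 1) := rfl
          have hsumu : ∑ i ∈ S, Function.update a j (a j - 1) i = M - 1 := by
            rw [Finset.sum_update_of_mem hjS]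
            simp only [← Finset.erase_eq]
            have := ha1 j hjS
            omega
          have hupd3 : (fun i => ((Function.update a j (a j - 1) i).factorial : ℚ))
              = Function.update (fun i => ((a i).factorial : ℚ)) j (((a j - 1).factorial : ℚ)) := by
            funext i
            by_cases hi : i = j
            · subst hi; simp
            · simp [Function.update_of_ne hi]
          have hfac : ((a j : ℚ)) * ((a j - 1).factorial : ℚ) = ((a j).factorial : ℚ) := by
            exact_mod_cast congrArg (Nat.cast (R := ℚ)) (Nat.mul_factorial_pred (Nat.one_le_iff_ne_zero.mp (ha1 j hjS)))
          have hprodu : prodA = (a j : ℚ) * ∏ i ∈ S, ((Function.update a j (a j - 1) i).factorial : ℚ) := by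
            rw [hupd3, Finset.prod_update_of_mem hjS, hprodA,
              ← Finset.mul_prod_erase S (fun i => ((a i).factorial : ℚ)) hjS, ← hfac, mul_assoc]
            simp [Finset.erase_eq]
          rw [hsumu, hprodu, mul_div_mul_left _ _ (by exact_mod_cast hz j hjS)]
        rw [Finset.sum_congr rfl key]
        have : ∑ j ∈ S, (a j : ℚ) * ((M - 1).factorial : ℚ) / prodA
            = (M : ℚ) * ((M - 1).factorial : ℚ) / prodA := by
          rw [← Finset.sum_div, ← Finset.sum_mul]
          congr 2
          exact_mod_cast hM.symm
        rw [this]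
        congr 1
        exact_mod_cast congrArg (Nat.cast (R := ℚ)) (Nat.mul_factorial_pred hMpos.ne')

end DysonProof

theorem dyson_conjecture (n : ℕ) (a : Fin (n+1) → ℕ) :
    CT (Dyson n a) =
      (Nat.factorial (∑ k, a k) : ℚ) / ∏ k, (Nat.factorial (a k) : ℚ) := by
  rw [DysonProof.Dyson_eq, DysonProof.master (∑ i, (a i + 1)) Finset.univ a le_rfl]
end
end

section
/- Let n ≥ 2 and let a(s,k) be elements of a commutative ring for 1 ≤ s, k ≤ n with s ≠ k. Then every term in the expansion of the product ∏_{s=1}^{n} ( Σ_{k ≠ s} a(s,k) ) contains a factor a(k,r)·a(s,l) for some indices satisfying 1 ≤ r ≤ s < k ≤ l ≤ n. Equivalently: for every function f : {1,...,n} → {1,...,n} with f(s) ≠ s for all s, there exist indices r, s, k, l with 1 ≤ r ≤ s < k ≤ l ≤ n such that f(k) = r and f(s) = l. -/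
/-- Lemma 4.2 of the paper: for any fixed-point-free choice function
`f : {1,…,n} → {1,…,n}` (so each term `∏_s a(s, f(s))` of the expansion of
`∏_{s=1}^n ∑_{k ≠ s} a(s,k)` has the factor `a(k,r)·a(s,l)`),
there exist `r ≤ s < k ≤ l` with `f k = r` and `f s = l`. -/
theorem crossing_pair_of_fixed_point_free (n : ℕ) (hn : 2 ≤ n)
    (f : Fin n → Fin n) (hf : ∀ s, f s ≠ s) :
    ∃ r s k l : Fin n, r ≤ s ∧ s < k ∧ k ≤ l ∧ f k = r ∧ f s = l := by
  have hn0 : 0 < n := by omega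
  set S : Finset (Fin n) := Finset.univ.filter (fun k => f k < k) with hS
  have hne : S.Nonempty := by
    refine ⟨Fin.last (n-1) |>.cast (by omega), ?_⟩
    simp only [hS, Finset.mem_filter, Finset.mem_univ, true_and]
    have hle : f ((Fin.last (n-1)).cast (by omega)) ≤ (Fin.last (n-1)).cast (by omega) := by
      apply Fin.le_def.mpr
      simp [Fin.last]
      omega
    exact lt_of_le_of_ne hle (hf _)
  set k := S.min' hne with hk
  have hkS : k ∈ S := S.min'_mem hne
  have hfk : f k < k := by
    have := hkS
    simpa [hS] using this
  have hk0 : 0 < k.val := by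
    by_contra h
    have : (k : ℕ) = 0 := by omega
    have : f k < k := hfk
    omega
  set s : Fin n := ⟨k.val - 1, by omega⟩ with hs
  have hsk : s < k := by
    apply Fin.lt_def.mpr; simp [hs]; omega
  have hsS : s ∉ S := fun h => absurd (S.min'_le s h) (by exact not_le.mpr hsk)
  have hfs : s < f s := by
    have hns : ¬ f s < s := by
      intro h
      exact hsS (by simp [hS, h])
    exact lt_of_le_of_ne (not_lt.mp hns) (Ne.symm (hf s))
  have hkfs : k ≤ f s := by
    apply Fin.le_def.mpr
    have := Fin.lt_def.mp hfs
    simp [hs] at this ⊢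
    omega
  have hrs : f k ≤ s := by
    apply Fin.le_def.mpr
    have := Fin.lt_def.mp hfk
    simp [hs]
    omega
  exact ⟨f k, s, k, f s, hrs, hsk, hkfs, rfl, rfl⟩
end

section
/- For every function f : Fin n → Fin n (n ≥ 2) with f(s) ≠ s for all s, there exist s < k such that f(k) ≤ s and f(s) ≥ k. -/
/-- Any fixed-point-free self-map of `Fin n` (`n ≥ 2`) has a crossing pair
`s < k` with `f k ≤ s` and `f s ≥ k`. -/
theorem crossing_pair (n : ℕ) (hn : 2 ≤ n) (f : Fin n → Fin n)
    (hf : ∀ s, f s ≠ s) :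
    ∃ s k : Fin n, s < k ∧ f k ≤ s ∧ k ≤ f s := by
  have hn0 : 0 < n := by omega
  set S : Finset (Fin n) := Finset.univ.filter (fun s => s < f s) with hS
  have h0 : (⟨0, hn0⟩ : Fin n) ∈ S := by
    simp only [hS, Finset.mem_filter, Finset.mem_univ, true_and]
    have h1 := hf ⟨0, hn0⟩
    have h2 : (f ⟨0, hn0⟩ : ℕ) ≠ 0 := fun h => h1 (Fin.ext h)
    rw [Fin.lt_def]
    simp only [Fin.val_mk] at *
    omega
  have hne : S.Nonempty := ⟨_, h0⟩
  set s := S.max' hne with hs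
  have hsS : s ∈ S := S.max'_mem hne
  have hsf : s < f s := by
    simpa [hS, Finset.mem_filter] using hsS
  have hk : (s : ℕ) + 1 < n := by
    have := (f s).isLt
    omega
  set k : Fin n := ⟨(s : ℕ) + 1, hk⟩ with hkdef
  have hsk : s < k := by
    simp [hkdef, Fin.lt_def]
  have hknS : k ∉ S := by
    intro hmem
    have := S.le_max' k hmem
    rw [← hs] at this
    exact absurd this (not_le.mpr hsk)
  have hfk : ¬ k < f k := by
    intro h
    exact hknS (by simp [hS, Finset.mem_filter, h])
  have hfk' : f k < k := lt_of_le_of_ne (not_lt.mp hfk) (hf k)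
  refine ⟨s, k, hsk, ?_, ?_⟩
  · have : (f k : ℕ) < (s : ℕ) + 1 := hfk'
    exact Fin.le_def.mpr (by omega)
  · exact Fin.le_def.mpr (by have := Fin.lt_def.mp hsf; simp [hkdef]; omega)
end

section
/- With notation as in the extended first-layer theorem, for subsets U ⊆ I_l with i_{t_s} ∈ I_l but i_{t_s} ∉ U ∪ {i_v} (where i_v = min I_l, I \ U = {i_{t_1},...,i_{t_{m-d}}} with t_1 < ⋯ < t_{m-d}, d = |U|), we have C(I_l) + L*(U | I_l) - C(I_l \ {i_{t_s}}) - L*(U | I_l \ {i_{t_s}}) = -Σ_{k=v}^{s-1} χ(i_{t_k} > j_{t_s} > i_v) a_{i_{t_k}} + Σ_{k=s+1}^{m-d} (1 - χ(i_{t_k} > j_{t_s} > i_v)) a_{i_{t_k}}. -/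
open Finsupp
noncomputable section
variable {n m : ℕ}

/-- `min {i_l : l ∈ S}` (with junk value `0` for `S = ∅`). -/
def imin (i : Fin m → Fin (n+1)) (S : Finset (Fin m)) : Fin (n+1) := S.inf i
/-- `t`: the number of paired `j`'s lying below `min {i_l : l ∈ S}`. -/
def tS (i j : Fin m → Fin (n+1)) (S : Finset (Fin m)) : ℕ :=
  (S.filter fun l => j l < imin i S).card
/-- `N(k, I_S)` -/
def NI (i : Fin m → Fin (n+1)) (S : Finset (Fin m)) (k : Fin (n+1)) : ℕ :=
  (S.filter fun l => i l ≤ k).card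
/-- `N(k, J⁺_S)` -/
def NJp (i j : Fin m → Fin (n+1)) (S : Finset (Fin m)) (k : Fin (n+1)) : ℕ :=
  (S.filter fun l => imin i S < j l ∧ j l ≤ k).card
/-- `N(k, J⁻_S)` -/
def NJm (i j : Fin m → Fin (n+1)) (S : Finset (Fin m)) (k : Fin (n+1)) : ℕ :=
  (S.filter fun l => j l < imin i S ∧ j l ≤ k).card
/-- `w_k`: equals `a_k` for `k ∉ T`, `0` for `k ∈ T` (as subsets of `{0,…,n}`). -/
def wgt (i : Fin m → Fin (n+1)) (a : Fin (n+1) → ℕ) (T : Finset (Fin m))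
    (k : Fin (n+1)) : ℤ :=
  if k ∈ T.image i then 0 else (a k : ℤ)
/-- `L*(T | I_S)` of the extended first-layer formula (eq. (6)),
for the pair `(I_S, J_S)` indexed by `S` and a subset `T ⊆ S`. -/
def Lstar (i j : Fin m → Fin (n+1)) (a : Fin (n+1) → ℕ)
    (S T : Finset (Fin m)) : ℤ :=
  (tS i j S : ℤ)
  + ∑ k ∈ Finset.univ.filter (fun k => imin i S ≤ k),
      ((NI i S k : ℤ) - (NJp i j S k : ℤ)) * wgt i a T k
  + ∑ k ∈ Finset.univ.filter (fun k => k < imin i S),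
      ((tS i j S : ℤ) - (NJm i j S k : ℤ)) * (a k : ℤ)
/-- `min 𝕀_k` for the chain (11): `𝕀` corresponding to `r ∈ Sᶜ` is
`I_S ∪ {i_{r'} : r' ∈ Sᶜ, r' ≥ r}`. -/
def mink (i : Fin m → Fin (n+1)) (S : Finset (Fin m)) (r : Fin m) : Fin (n+1) :=
  imin i (S ∪ Sᶜ.filter fun r' => r ≤ r')
/-- `C(I_S)` of equation (12). -/
def Cfun (i j : Fin m → Fin (n+1)) (a : Fin (n+1) → ℕ) (S : Finset (Fin m)) : ℤ :=
  1 + (∑ k, (a k : ℤ)) - (∑ l ∈ S, (a (i l) : ℤ))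
  + ∑ r ∈ Sᶜ, ((NI i S (i r) : ℤ) -
      (((insert r S).filter fun l => mink i S r < j l ∧ j l ≤ i r).card : ℤ))
      * (a (i r) : ℤ)
  - Lstar i j a S S
/-- `g(i_{t_s})` of Lemma 4.1, indexed by the element `p = t_s` of the
complement of `U`; `v` is the index of `i_v = min I_l`. -/
def gfun (i j : Fin m → Fin (n+1)) (a : Fin (n+1) → ℕ) (U : Finset (Fin m))
    (v p : Fin m) : ℤ :=
  - (∑ p' ∈ Uᶜ.filter fun p' => v ≤ p' ∧ p' < p,
      if i v < j p ∧ j p < i p' then (a (i p') : ℤ) else 0)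
  + ∑ p' ∈ Uᶜ.filter fun p' => p < p',
      (1 - if i v < j p ∧ j p < i p' then 1 else 0) * (a (i p') : ℤ)

lemma card_filter_insert {α : Type*} [DecidableEq α] (P : α → Prop) [DecidablePred P]
    {p : α} {s : Finset α} (hp : p ∉ s) :
    ((insert p s).filter P).card = (s.filter P).card + if P p then 1 else 0 := by
  rw [Finset.filter_insert]
  split_ifs with h
  · rw [Finset.card_insert_of_notMem (by simp [hp])]
  · simp

lemma card_filter_insert_int {α : Type*} [DecidableEq α] (P : α → Prop) [DecidablePred P]
    {p : α} {s : Finset α} (hp : p ∉ s) :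
    ((((insert p s).filter P).card : ℤ)) = ((s.filter P).card : ℤ) + if P p then 1 else 0 := by
  rw [card_filter_insert P hp]; push_cast; split_ifs <;> simp

lemma imin_eq {i : Fin m → Fin (n+1)} (hi : Monotone i) {S : Finset (Fin m)} {v : Fin m}
    (hvS : v ∈ S) (hv : ∀ l ∈ S, v ≤ l) : imin i S = i v :=
  le_antisymm (Finset.inf_le hvS) (Finset.le_inf fun l hl => hi (hv l hl))

lemma mink_eq {i : Fin m → Fin (n+1)} (hi : Monotone i) {S : Finset (Fin m)} {v r : Fin m}
    (hvS : v ∈ S) (hv : ∀ l ∈ S, v ≤ l) (hr : r ∉ S) : mink i S r = i (min v r) := by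
  unfold mink
  apply imin_eq hi
  · rcases le_total v r with h | h
    · simp [min_eq_left h, Finset.mem_union, hvS]
    · simp only [Finset.mem_union, Finset.mem_filter, Finset.mem_compl]
      exact Or.inr ⟨by simpa [min_eq_right h] using hr, by simp [min_eq_right h]⟩
  · intro l hl
    rcases Finset.mem_union.mp hl with h | h
    · exact le_trans (min_le_left _ _) (hv l h)
    · exact le_trans (min_le_right _ _) (Finset.mem_filter.mp h).2

/-- Lemma 4.1 ('lem-subtract').  `i` enumerates `I = {i_1 < ⋯ < i_m}`,
`j` the multi-set `J = {j_1 ≤ ⋯ ≤ j_m}` with `I ∩ J = ∅`; `S` indexes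
`I_l ⊆ I`, `U ⊆ I_l`, `v` indexes `i_v = min I_l`, and `p` indexes an
element `i_{t_s} ∈ I_l` with `i_{t_s} ∉ U ∪ {i_v}`. -/
theorem lem_subtract (i j : Fin m → Fin (n+1)) (hi : StrictMono i)
    (hj : Monotone j) (hij : ∀ k l, i k ≠ j l) (a : Fin (n+1) → ℕ)
    (S U : Finset (Fin m)) (hUS : U ⊆ S)
    (v : Fin m) (hvS : v ∈ S) (hv : ∀ l ∈ S, v ≤ l)
    (p : Fin m) (hpS : p ∈ S) (hpU : p ∉ U) (hpv : p ≠ v) :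
    (Cfun i j a S + Lstar i j a S U)
      - (Cfun i j a (S.erase p) + Lstar i j a (S.erase p) U)
    = gfun i j a U v p := by
  classical
  set S' := S.erase p with hS'def
  have hpS' : p ∉ S' := Finset.notMem_erase p S
  have hins : insert p S' = S := Finset.insert_erase hpS
  have hvS' : v ∈ S' := Finset.mem_erase.mpr ⟨Ne.symm hpv, hvS⟩
  have hv' : ∀ l ∈ S', v ≤ l := fun l hl => hv l (Finset.mem_of_mem_erase hl)
  have hμ : imin i S = i v := imin_eq hi.monotone hvS hv
  have hμ' : imin i S' = i v := imin_eq hi.monotone hvS' hv'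
  have hvp : v ≤ p := hv p hpS
  have hivp : i v < i p := hi (lt_of_le_of_ne hvp (Ne.symm hpv))
  -- counting splits
  have htS : (tS i j S : ℤ) = (tS i j S' : ℤ) + (if j p < i v then 1 else 0) := by
    unfold tS
    rw [hμ, hμ', ← hins, card_filter_insert_int _ hpS']
  have hNI : ∀ k, (NI i S k : ℤ) = (NI i S' k : ℤ) + (if i p ≤ k then 1 else 0) := by
    intro k; unfold NI; rw [← hins, card_filter_insert_int _ hpS']
  have hNJp : ∀ k, (NJp i j S k : ℤ)
      = (NJp i j S' k : ℤ) + (if i v < j p ∧ j p ≤ k then 1 else 0) := by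
    intro k; unfold NJp; rw [hμ, hμ', ← hins, card_filter_insert_int _ hpS']
  have hNJm : ∀ k, (NJm i j S k : ℤ)
      = (NJm i j S' k : ℤ) + (if j p < i v ∧ j p ≤ k then 1 else 0) := by
    intro k; unfold NJm; rw [hμ, hμ', ← hins, card_filter_insert_int _ hpS']
  -- weight lemmas
  have hwS : ∀ k, wgt i a S' k = wgt i a S k + (if k = i p then 1 else 0) * (a (i p) : ℤ) := by
    intro k; unfold wgt
    by_cases hk : k = i p
    · subst hk
      have h1 : i p ∈ S.image i := Finset.mem_image_of_mem i hpS
      have h2 : i p ∉ S'.image i := by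
        simp only [Finset.mem_image, not_exists, not_and]
        intro l hl hle
        exact hpS' (hi.injective hle ▸ hl)
      simp [h1, h2]
    · have : k ∈ S.image i ↔ k ∈ S'.image i := by
        rw [← hins, Finset.image_insert, Finset.mem_insert]
        simp [hk]
      simp [this, hk]
  have himg : ∀ k, k ∈ (S \ U).image i ↔ (k ∈ S.image i ∧ k ∉ U.image i) := by
    intro k
    simp only [Finset.mem_image, Finset.mem_sdiff]
    constructor
    · rintro ⟨l, ⟨hlS, hlU⟩, rfl⟩
      refine ⟨⟨l, hlS, rfl⟩, ?_⟩
      rintro ⟨u, huU, hui⟩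
      exact hlU (hi.injective hui ▸ huU)
    · rintro ⟨⟨l, hlS, rfl⟩, hnU⟩
      exact ⟨l, ⟨hlS, fun hlU => hnU ⟨l, hlU, rfl⟩⟩, rfl⟩
  have hwU : ∀ k, wgt i a U k - wgt i a S k
      = (if k ∈ (S \ U).image i then (a k : ℤ) else 0) := by
    intro k; unfold wgt
    by_cases h1 : k ∈ U.image i
    · have h2 : k ∈ S.image i := by
        obtain ⟨l, hl, rfl⟩ := Finset.mem_image.mp h1
        exact Finset.mem_image_of_mem i (hUS hl)
      simp [h1, h2, (himg k).not.mpr (by simp [h1])]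
    · by_cases h2 : k ∈ S.image i
      · simp [h1, h2, (himg k).mpr ⟨h2, h1⟩]
      · simp [h1, h2, (himg k).not.mpr (by simp [h2])]
  -- Lstar differences
  set F : Fin (n+1) → ℤ := fun k =>
    (if i p ≤ k then (1:ℤ) else 0) - (if i v < j p ∧ j p ≤ k then 1 else 0) with hF
  have hB : (∑ k ∈ Finset.univ.filter (fun k => k < i v),
        ((tS i j S : ℤ) - (NJm i j S k : ℤ)) * (a k : ℤ))
      - (∑ k ∈ Finset.univ.filter (fun k => k < i v),
        ((tS i j S' : ℤ) - (NJm i j S' k : ℤ)) * (a k : ℤ))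
      = ∑ k ∈ Finset.univ.filter (fun k => k < i v),
        ((if j p < i v then (1:ℤ) else 0) - (if j p < i v ∧ j p ≤ k then 1 else 0)) * (a k : ℤ) := by
    rw [← Finset.sum_sub_distrib]
    exact Finset.sum_congr rfl fun k _ => by rw [htS, hNJm k]; ring
  have hA1 : (∑ k ∈ Finset.univ.filter (fun k => i v ≤ k),
        ((NI i S k : ℤ) - (NJp i j S k : ℤ)) * wgt i a U k)
      - (∑ k ∈ Finset.univ.filter (fun k => i v ≤ k),
        ((NI i S' k : ℤ) - (NJp i j S' k : ℤ)) * wgt i a U k)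
      = ∑ k ∈ Finset.univ.filter (fun k => i v ≤ k), F k * wgt i a U k := by
    rw [← Finset.sum_sub_distrib]
    refine Finset.sum_congr rfl fun k _ => ?_
    simp only [hF]
    rw [hNI k, hNJp k]; ring
  have hD1 : Lstar i j a S U - Lstar i j a S' U
      = (if j p < i v then 1 else 0)
        + ∑ k ∈ Finset.univ.filter (fun k => i v ≤ k), F k * wgt i a U k
        + ∑ k ∈ Finset.univ.filter (fun k => k < i v),
            ((if j p < i v then (1:ℤ) else 0) - (if j p < i v ∧ j p ≤ k then 1 else 0)) * (a k : ℤ) := by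
    unfold Lstar
    rw [hμ, hμ']
    linear_combination htS + hA1 + hB
  have hA2 : (∑ k ∈ Finset.univ.filter (fun k => i v ≤ k),
        ((NI i S k : ℤ) - (NJp i j S k : ℤ)) * wgt i a S k)
      - (∑ k ∈ Finset.univ.filter (fun k => i v ≤ k),
        ((NI i S' k : ℤ) - (NJp i j S' k : ℤ)) * wgt i a S' k)
      = (∑ k ∈ Finset.univ.filter (fun k => i v ≤ k), F k * wgt i a S k)
        - ((NI i S' (i p) : ℤ) - (NJp i j S' (i p) : ℤ)) * (a (i p) : ℤ) := by
    rw [← Finset.sum_sub_distrib]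
    have step : ∀ k ∈ Finset.univ.filter (fun k => i v ≤ k),
        ((NI i S k : ℤ) - (NJp i j S k : ℤ)) * wgt i a S k
          - ((NI i S' k : ℤ) - (NJp i j S' k : ℤ)) * wgt i a S' k
        = F k * wgt i a S k
          - (if k = i p then ((NI i S' k : ℤ) - (NJp i j S' k : ℤ)) * (a (i p) : ℤ) else 0) := by
      intro k _
      simp only [hF]
      rw [hNI k, hNJp k, hwS k]
      split_ifs <;> ring
    rw [Finset.sum_congr rfl step, Finset.sum_sub_distrib,
      Finset.sum_ite_eq' (Finset.univ.filter (fun k => i v ≤ k)) (i p)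
        (fun k => ((NI i S' k : ℤ) - (NJp i j S' k : ℤ)) * (a (i p) : ℤ)),
      if_pos (by simp [le_of_lt hivp])]
  have hD2 : Lstar i j a S S - Lstar i j a S' S'
      = (if j p < i v then 1 else 0)
        + (∑ k ∈ Finset.univ.filter (fun k => i v ≤ k), F k * wgt i a S k)
        - ((NI i S' (i p) : ℤ) - (NJp i j S' (i p) : ℤ)) * (a (i p) : ℤ)
        + ∑ k ∈ Finset.univ.filter (fun k => k < i v),
            ((if j p < i v then (1:ℤ) else 0) - (if j p < i v ∧ j p ≤ k then 1 else 0)) * (a k : ℤ) := by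
    unfold Lstar
    rw [hμ, hμ']
    linear_combination htS + hA2 + hB
  -- combine D1 - D2
  have hsub : ((S \ U).image i) ⊆ Finset.univ.filter (fun k => i v ≤ k) := by
    intro k hk
    obtain ⟨l, hl, rfl⟩ := Finset.mem_image.mp hk
    simp only [Finset.mem_filter, Finset.mem_univ, true_and]
    exact hi.monotone (hv l (Finset.mem_sdiff.mp hl).1)
  have hD12 : (Lstar i j a S U - Lstar i j a S' U) - (Lstar i j a S S - Lstar i j a S' S')
      = (∑ l ∈ S \ U, F (i l) * (a (i l) : ℤ))
        + ((NI i S' (i p) : ℤ) - (NJp i j S' (i p) : ℤ)) * (a (i p) : ℤ) := by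
    have hsum1 : (∑ k ∈ Finset.univ.filter (fun k => i v ≤ k), F k * wgt i a U k)
        - (∑ k ∈ Finset.univ.filter (fun k => i v ≤ k), F k * wgt i a S k)
        = ∑ l ∈ S \ U, F (i l) * (a (i l) : ℤ) := by
      rw [← Finset.sum_sub_distrib]
      have step : ∀ k ∈ Finset.univ.filter (fun k => i v ≤ k),
          F k * wgt i a U k - F k * wgt i a S k
          = if k ∈ (S \ U).image i then F k * (a k : ℤ) else 0 := by
        intro k _
        rw [← mul_sub, hwU k, mul_ite, mul_zero]
      rw [Finset.sum_congr rfl step, Finset.sum_ite_mem,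
        Finset.inter_eq_right.mpr hsub,
        Finset.sum_image (fun x _ y _ h => hi.injective h)]
    linear_combination hD1 - hD2 + hsum1
  -- Cfun difference (non-Lstar part)
  have hmk' : ∀ r ∉ S', mink i S' r = i (min v r) :=
    fun r hr => mink_eq hi.monotone hvS' hv' hr
  have e1 : (∑ l ∈ S, (a (i l) : ℤ)) = (∑ l ∈ S', (a (i l) : ℤ)) + (a (i p) : ℤ) := by
    rw [← hins, Finset.sum_insert hpS']; ring
  have e2 : S'ᶜ = insert p Sᶜ := by rw [hS'def, Finset.compl_erase]
  have e3 : (∑ r ∈ S'ᶜ, ((NI i S' (i r) : ℤ) -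
        (((insert r S').filter fun l => mink i S' r < j l ∧ j l ≤ i r).card : ℤ))
        * (a (i r) : ℤ))
      = ((NI i S' (i p) : ℤ) - ((S.filter fun l => i v < j l ∧ j l ≤ i p).card : ℤ)) * (a (i p) : ℤ)
        + ∑ r ∈ Sᶜ, ((NI i S' (i r) : ℤ) -
            (((insert r S').filter fun l => i (min v r) < j l ∧ j l ≤ i r).card : ℤ))
            * (a (i r) : ℤ) := by
    rw [e2, Finset.sum_insert (by simp [hpS])]
    congr 1
    · rw [hmk' p hpS', min_eq_left hvp, hins]
    · refine Finset.sum_congr rfl fun r hr => ?_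
      have hrS : r ∉ S := Finset.mem_compl.mp hr
      rw [hmk' r (fun h => hrS (Finset.mem_of_mem_erase h))]
  have e4 : (∑ r ∈ Sᶜ, ((NI i S (i r) : ℤ) -
        (((insert r S).filter fun l => mink i S r < j l ∧ j l ≤ i r).card : ℤ))
        * (a (i r) : ℤ))
      - (∑ r ∈ Sᶜ, ((NI i S' (i r) : ℤ) -
          (((insert r S').filter fun l => i (min v r) < j l ∧ j l ≤ i r).card : ℤ))
          * (a (i r) : ℤ))
      = ∑ r ∈ Sᶜ, ((if i p ≤ i r then (1:ℤ) else 0)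
          - (if i (min v r) < j p ∧ j p ≤ i r then 1 else 0)) * (a (i r) : ℤ) := by
    rw [← Finset.sum_sub_distrib]
    refine Finset.sum_congr rfl fun r hr => ?_
    have hrS : r ∉ S := Finset.mem_compl.mp hr
    have hpr : p ≠ r := fun h => hrS (h ▸ hpS)
    have hins2 : insert r S = insert p (insert r S') := by
      rw [← hins, Finset.insert_comm]
    rw [hNI (i r), mink_eq hi.monotone hvS hv hrS, hins2,
      card_filter_insert_int _ (by simp [hpS', hpr])]
    ring
  have hCpre : (Cfun i j a S + Lstar i j a S S) - (Cfun i j a S' + Lstar i j a S' S')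
      = -(a (i p) : ℤ)
        + (∑ r ∈ Sᶜ, ((if i p ≤ i r then (1:ℤ) else 0)
            - (if i (min v r) < j p ∧ j p ≤ i r then 1 else 0)) * (a (i r) : ℤ))
        - ((NI i S' (i p) : ℤ) - ((S.filter fun l => i v < j l ∧ j l ≤ i p).card : ℤ))
            * (a (i p) : ℤ) := by
    unfold Cfun
    linear_combination e4 - e1 - e3
  -- key cancellation at p
  have hkey : ((S.filter fun l => i v < j l ∧ j l ≤ i p).card : ℤ) - (NJp i j S' (i p) : ℤ)
      = if i v < j p ∧ j p ≤ i p then 1 else 0 := by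
    unfold NJp
    rw [hμ', ← hins, card_filter_insert_int _ hpS']
    ring
  -- assemble LHS
  have hpSU : p ∈ S \ U := Finset.mem_sdiff.mpr ⟨hpS, hpU⟩
  have main : (Cfun i j a S + Lstar i j a S U) - (Cfun i j a S' + Lstar i j a S' U)
      = (∑ r ∈ Sᶜ, ((if i p ≤ i r then (1:ℤ) else 0)
            - (if i (min v r) < j p ∧ j p ≤ i r then 1 else 0)) * (a (i r) : ℤ))
        + ∑ l ∈ S \ U, (F (i l) * (a (i l) : ℤ)
            + (if l = p then ((if i v < j p ∧ j p ≤ i p then (1:ℤ) else 0) - 1)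
                * (a (i p) : ℤ) else 0)) := by
    have hp' : (∑ l ∈ S \ U, (if l = p then ((if i v < j p ∧ j p ≤ i p then (1:ℤ) else 0) - 1)
          * (a (i p) : ℤ) else 0))
        = ((if i v < j p ∧ j p ≤ i p then (1:ℤ) else 0) - 1) * (a (i p) : ℤ) := by
      rw [Finset.sum_ite_eq' (S \ U) p (fun _ => ((if i v < j p ∧ j p ≤ i p then (1:ℤ) else 0) - 1)
          * (a (i p) : ℤ)), if_pos hpSU]
    rw [Finset.sum_add_distrib, hp']
    linear_combination hCpre + hD12 + (a (i p) : ℤ) * hkey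
  -- final pointwise identities
  have hjple : ∀ l : Fin m, (j p ≤ i l) = (j p < i l) :=
    fun l => propext ⟨fun h => lt_of_le_of_ne h (hij l p).symm, le_of_lt⟩
  have hUc : Uᶜ = (S \ U) ∪ Sᶜ := by
    ext x
    simp only [Finset.mem_compl, Finset.mem_union, Finset.mem_sdiff]
    by_cases hx : x ∈ S <;> tauto
  have hdisj : Disjoint (S \ U) Sᶜ := by
    rw [Finset.disjoint_left]
    intro x hx hx2
    exact (Finset.mem_compl.mp hx2) (Finset.mem_sdiff.mp hx).1
  rw [main]
  unfold gfun
  rw [Finset.sum_filter, Finset.sum_filter, hUc, Finset.sum_union hdisj, Finset.sum_union hdisj]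
  have hSc : ∑ r ∈ Sᶜ, ((if i p ≤ i r then (1:ℤ) else 0)
        - (if i (min v r) < j p ∧ j p ≤ i r then 1 else 0)) * (a (i r) : ℤ)
      = -(∑ r ∈ Sᶜ, if v ≤ r ∧ r < p then (if i v < j p ∧ j p < i r then (a (i r) : ℤ) else 0) else 0)
        + ∑ r ∈ Sᶜ, (if p < r then (1 - if i v < j p ∧ j p < i r then 1 else 0) * (a (i r) : ℤ) else 0) := by
    rw [← Finset.sum_neg_distrib, ← Finset.sum_add_distrib]
    refine Finset.sum_congr rfl fun r hr => ?_
    have hrS : r ∉ S := Finset.mem_compl.mp hr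
    have hrp : r ≠ p := fun h => hrS (h ▸ hpS)
    simp only [hjple, hi.le_iff_le]
    by_cases hvr : v ≤ r
    · rw [min_eq_left hvr]
      rcases lt_or_gt_of_ne hrp with h | h <;>
      · simp only [Fin.lt_def, Fin.le_def] at h hvr ⊢
        split_ifs <;> first
          | ring1
          | omega
    · have hrv : r < v := not_le.mp hvr
      have h1 : r < p := lt_of_lt_of_le hrv hvp
      rw [min_eq_right (le_of_lt hrv)]
      simp only [Fin.lt_def, Fin.le_def] at h1 hvr ⊢
      split_ifs <;> first
        | ring1
        | omega
  have hSU : ∑ l ∈ S \ U, (F (i l) * (a (i l) : ℤ)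
        + (if l = p then ((if i v < j p ∧ j p ≤ i p then (1:ℤ) else 0) - 1) * (a (i p) : ℤ) else 0))
      = -(∑ l ∈ S \ U, if v ≤ l ∧ l < p then (if i v < j p ∧ j p < i l then (a (i l) : ℤ) else 0) else 0)
        + ∑ l ∈ S \ U, (if p < l then (1 - if i v < j p ∧ j p < i l then 1 else 0) * (a (i l) : ℤ) else 0) := by
    rw [← Finset.sum_neg_distrib, ← Finset.sum_add_distrib]
    refine Finset.sum_congr rfl fun l hl => ?_
    have hlS : l ∈ S := (Finset.mem_sdiff.mp hl).1
    have hvl : v ≤ l := hv l hlS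
    simp only [hF, hjple, hi.le_iff_le]
    by_cases hlp : l = p
    · subst hlp
      simp only [Fin.lt_def, Fin.le_def] at hvl ⊢
      split_ifs <;> first
        | ring1
        | omega
    · rcases lt_or_gt_of_ne hlp with h | h <;>
      · simp only [Fin.lt_def, Fin.le_def] at h hvl ⊢
        split_ifs <;> first
          | ring1
          | omega
  linear_combination hSc + hSU
end
end

section
/- With the hypotheses and notation of the factorization lemma, assume additionally that there are no indices s < t < u in {1,...,m} with j_t < i_s < j_u < i_t. Then whenever I \ U \ {i_1,...,i_v} ≠ ∅, the product ∏_{i_{t_s} ∈ I \ U \ {i_1,...,i_v}} (1 - q^{g(i_{t_s})}) equals 0; equivalently, some g(i_{t_s}) = 0. -/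
open Finsupp
noncomputable section
variable {n m : ℕ}

def qq : RatFunc ℚ := RatFunc.X

/-- The cancelation part of Lemma 4.3: under the no-crossing hypothesis on
`(I,J)`, if `I \ U \ {i_1,…,i_v} ≠ ∅` then the product
`∏ (1 - q^{g(i_{t_s})})` vanishes; equivalently some `g(i_{t_s}) = 0`. -/
theorem lem_factor_cancel (i j : Fin m → Fin (n+1)) (hi : StrictMono i)
    (hj : Monotone j) (hij : ∀ k l, i k ≠ j l) (a : Fin (n+1) → ℕ)
    (hcross : ∀ s t u : Fin m, s < t → t < u →
      ¬(j t < i s ∧ i s < j u ∧ j u < i t))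
    (U : Finset (Fin m)) (hU : U.Nonempty) (hUne : U ≠ Finset.univ)
    (v : Fin m) (hv : ∀ l ∈ U, v ≤ l)
    (hne : (Uᶜ.filter (fun p => v < p)).Nonempty) :
    (∏ p ∈ Uᶜ.filter (fun p => v < p), (1 - qq ^ gfun i j a U v p)) = 0 ∧
    ∃ p ∈ Uᶜ.filter (fun p => v < p), gfun i j a U v p = 0 := by
  classical
  set T := Uᶜ.filter (fun p => v < p) with hT
  suffices h : ∃ p ∈ T, gfun i j a U v p = 0 by
    obtain ⟨p, hp, hg⟩ := h
    refine ⟨Finset.prod_eq_zero hp ?_, ⟨p, hp, hg⟩⟩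
    rw [hg]; simp
  set B := T.filter (fun p => ∀ p' ∈ Uᶜ, p < p' → i v < j p ∧ j p < i p') with hB
  have hBne : B.Nonempty := by
    refine ⟨T.max' hne, Finset.mem_filter.mpr ⟨T.max'_mem hne, ?_⟩⟩
    intro p' hp' hlt
    exfalso
    have hmem : p' ∈ T := Finset.mem_filter.mpr
      ⟨hp', lt_trans (Finset.mem_filter.mp (T.max'_mem hne)).2 hlt⟩
    exact absurd (T.le_max' p' hmem) (not_le.mpr hlt)
  set p := B.min' hBne with hpdef
  have hpB := B.min'_mem hBne
  have hpT : p ∈ T := (Finset.mem_filter.mp hpB).1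
  have hpcond := (Finset.mem_filter.mp hpB).2
  have hpv : v < p := (Finset.mem_filter.mp hpT).2
  have hii : ∀ p' ∈ Uᶜ, v ≤ p' → p' < p → ¬(i v < j p ∧ j p < i p') := by
    rintro p' hp'U hvp' hp'p ⟨h1, h2⟩
    rcases eq_or_lt_of_le hvp' with rfl | hvlt
    · exact absurd (h1.trans h2) (lt_irrefl _)
    · have hp'T : p' ∈ T := Finset.mem_filter.mpr ⟨hp'U, hvlt⟩
      have hp'B : p' ∈ B := by
        refine Finset.mem_filter.mpr ⟨hp'T, ?_⟩
        intro p'' hp'' hlt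
        have hjj : j p' ≤ j p := hj hp'p.le
        have hjp' : j p' < i p' := lt_of_le_of_lt hjj h2
        refine ⟨?_, hjp'.trans (hi hlt)⟩
        rcases (hij v p').lt_or_gt with h | h
        · exact h
        · exact absurd ⟨h, h1, h2⟩ (hcross v p' p hvlt hp'p)
      exact absurd (B.min'_le p' hp'B) (not_le.mpr hp'p)
  refine ⟨p, hpT, ?_⟩
  have s1 : (∑ p' ∈ Uᶜ.filter fun p' => v ≤ p' ∧ p' < p,
      if i v < j p ∧ j p < i p' then (a (i p') : ℤ) else 0) = 0 := by
    apply Finset.sum_eq_zero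
    intro p' hp'
    obtain ⟨hU', hv', hlt⟩ := Finset.mem_filter.mp hp'
    exact if_neg (hii p' hU' hv' hlt)
  have s2 : (∑ p' ∈ Uᶜ.filter fun p' => p < p',
      ((1 : ℤ) - if i v < j p ∧ j p < i p' then 1 else 0) * (a (i p') : ℤ)) = 0 := by
    apply Finset.sum_eq_zero
    intro p' hp'
    obtain ⟨hU', hlt⟩ := Finset.mem_filter.mp hp'
    rw [if_pos (hpcond p' hU' hlt)]; ring
  unfold gfun
  rw [s1, s2]; ring
end
end

section
/- If U = {i_h, i_{h+1}, ..., i_m} is a 'tail' subset of I = {i_1 < ⋯ < i_m} with h ≥ 2, then q^{C(U) + L*(U|U)} = q^{C(U ∪ {i_{h-1}}) + L*(U | U ∪ {i_{h-1}})}; in fact both exponents equal 1 + a - Σ_{k ∈ U} a_k. -/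
open Finsupp
noncomputable section
variable {n m : ℕ}

section helpers

lemma imin_Ici (i : Fin m → Fin (n+1)) (hi : StrictMono i) (r : Fin m) :
    imin i (Finset.Ici r) = i r := by
  unfold imin
  apply le_antisymm
  · exact Finset.inf_le (Finset.mem_Ici.mpr le_rfl)
  · exact Finset.le_inf fun l hl => hi.monotone (Finset.mem_Ici.mp hl)

lemma union_tail (h r : Fin m) (hr : r ≤ h) :
    Finset.Ici h ∪ (Finset.Ici h)ᶜ.filter (fun r' => r ≤ r') = Finset.Ici r := by
  ext x
  simp only [Finset.mem_union, Finset.mem_filter, Finset.mem_compl, Finset.mem_Ici]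
  constructor
  · rintro (hx | ⟨_, hx⟩)
    · exact le_trans hr hx
    · exact hx
  · intro hx
    by_cases hxh : h ≤ x
    · exact Or.inl hxh
    · exact Or.inr ⟨by simpa using hxh, hx⟩

lemma sumC_zero (i j : Fin m → Fin (n+1)) (hi : StrictMono i) (a : Fin (n+1) → ℕ)
    (h : Fin m) :
    ∑ r ∈ (Finset.Ici h)ᶜ, ((NI i (Finset.Ici h) (i r) : ℤ) -
      (((insert r (Finset.Ici h)).filter fun l =>
          mink i (Finset.Ici h) r < j l ∧ j l ≤ i r).card : ℤ))
      * (a (i r) : ℤ) = 0 := by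
  apply Finset.sum_eq_zero
  intro r hr
  have hrh : r < h := by simpa [Finset.mem_compl, Finset.mem_Ici, not_le] using hr
  have h1 : NI i (Finset.Ici h) (i r) = 0 := by
    unfold NI
    rw [Finset.card_eq_zero, Finset.filter_eq_empty_iff]
    intro l hl
    exact not_le.mpr (hi (lt_of_lt_of_le hrh (Finset.mem_Ici.mp hl)))
  have h2 : mink i (Finset.Ici h) r = i r := by
    unfold mink
    rw [union_tail h r hrh.le, imin_Ici i hi]
  have h3 : ((insert r (Finset.Ici h)).filter fun l =>
      mink i (Finset.Ici h) r < j l ∧ j l ≤ i r) = ∅ := by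
    rw [h2, Finset.filter_eq_empty_iff]
    rintro l _ ⟨h4, h5⟩
    exact absurd (lt_of_lt_of_le h4 h5) (lt_irrefl _)
  rw [h1, h3]
  simp

end helpers
lemma lstar_diff (i j : Fin m → Fin (n+1)) (hi : StrictMono i) (a : Fin (n+1) → ℕ)
    (h p : Fin m) (hph : (p : ℕ) + 1 = (h : ℕ)) :
    Lstar i j a (Finset.Ici p) (Finset.Ici h)
      = Lstar i j a (Finset.Ici p) (Finset.Ici p) + (a (i p) : ℤ) := by
  have hImin : imin i (Finset.Ici p) = i p := imin_Ici i hi p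
  have hins : Finset.Ici p = insert p (Finset.Ici h) := by
    ext x
    simp only [Finset.mem_insert, Finset.mem_Ici, Fin.le_def, Fin.ext_iff]
    omega
  have hNI : NI i (Finset.Ici p) (i p) = 1 := by
    unfold NI
    rw [Finset.card_eq_one]
    refine ⟨p, ?_⟩
    ext l
    simp only [Finset.mem_filter, Finset.mem_Ici, Finset.mem_singleton]
    constructor
    · rintro ⟨h1, h2⟩
      exact le_antisymm
        (by by_contra hc; exact absurd h2 (not_le.mpr (hi (lt_of_not_ge hc)))) h1
    · rintro rfl; exact ⟨le_rfl, le_rfl⟩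
  have hNJp : NJp i j (Finset.Ici p) (i p) = 0 := by
    unfold NJp
    rw [Finset.card_eq_zero, Finset.filter_eq_empty_iff]
    rintro l _ ⟨h4, h5⟩
    rw [hImin] at h4
    exact absurd (lt_of_lt_of_le h4 h5) (lt_irrefl _)
  have hwS : wgt i a (Finset.Ici p) (i p) = 0 := by
    unfold wgt
    rw [if_pos (Finset.mem_image_of_mem i (Finset.mem_Ici.mpr le_rfl))]
  have hwT : wgt i a (Finset.Ici h) (i p) = (a (i p) : ℤ) := by
    unfold wgt
    rw [if_neg]
    intro hc
    obtain ⟨l, hl, he⟩ := Finset.mem_image.mp hc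
    have : l = p := hi.injective he
    subst this
    have := Finset.mem_Ici.mp hl
    rw [Fin.le_def] at this
    omega
  have hkey : ∑ k ∈ Finset.univ.filter (fun k => imin i (Finset.Ici p) ≤ k),
      (((NI i (Finset.Ici p) k : ℤ) - (NJp i j (Finset.Ici p) k : ℤ))
          * wgt i a (Finset.Ici h) k
        - ((NI i (Finset.Ici p) k : ℤ) - (NJp i j (Finset.Ici p) k : ℤ))
          * wgt i a (Finset.Ici p) k)
      = ((NI i (Finset.Ici p) (i p) : ℤ) - (NJp i j (Finset.Ici p) (i p) : ℤ))
          * wgt i a (Finset.Ici h) (i p)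
        - ((NI i (Finset.Ici p) (i p) : ℤ) - (NJp i j (Finset.Ici p) (i p) : ℤ))
          * wgt i a (Finset.Ici p) (i p) := by
    apply Finset.sum_eq_single_of_mem (i p) (by simp [hImin])
    intro k _ hkne
    have hw : wgt i a (Finset.Ici h) k = wgt i a (Finset.Ici p) k := by
      unfold wgt
      have : k ∈ (Finset.Ici h).image i ↔ k ∈ (Finset.Ici p).image i := by
        rw [hins, Finset.image_insert, Finset.mem_insert]
        exact ⟨fun hh => Or.inr hh, fun hh => hh.resolve_left fun e => hkne e⟩
      by_cases hk : k ∈ (Finset.Ici h).image i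
      · rw [if_pos hk, if_pos (this.mp hk)]
      · rw [if_neg hk, if_neg (fun c => hk (this.mpr c))]
    rw [hw]; ring
  rw [hNI, hNJp, hwS, hwT] at hkey
  rw [Finset.sum_sub_distrib] at hkey
  norm_num at hkey
  unfold Lstar
  linarith

/-- Lemma 4.4 ('lem-cancel'): for a tail subset `U = {i_h, …, i_m}` (with
`h ≥ 2`, i.e. `U ∪ {i_{h-1}} ⊆ I`), both exponents
`C(U) + L*(U|U)` and `C(U ∪ {i_{h-1}}) + L*(U | U ∪ {i_{h-1}})` are equal
to `1 + a - ∑_{k ∈ U} a_k`; in particular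
`q^{C(U)+L*(U|U)} = q^{C(U ∪ {i_{h-1}}) + L*(U|U ∪ {i_{h-1}})}`.
Here `h, p : Fin m` with `p + 1 = h`, so `U = Ici h` and
`U ∪ {i_{h-1}} = Ici p`. -/
theorem lem_cancel (i j : Fin m → Fin (n+1)) (hi : StrictMono i)
    (hj : Monotone j) (hij : ∀ k l, i k ≠ j l) (a : Fin (n+1) → ℕ)
    (h p : Fin m) (hph : (p : ℕ) + 1 = (h : ℕ)) :
    Cfun i j a (Finset.Ici h) + Lstar i j a (Finset.Ici h) (Finset.Ici h)
      = 1 + (∑ k, (a k : ℤ)) - ∑ l ∈ Finset.Ici h, (a (i l) : ℤ) ∧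
    Cfun i j a (Finset.Ici p) + Lstar i j a (Finset.Ici p) (Finset.Ici h)
      = 1 + (∑ k, (a k : ℤ)) - ∑ l ∈ Finset.Ici h, (a (i l) : ℤ) := by
  constructor
  · unfold Cfun
    rw [sumC_zero i j hi a h]
    ring
  · rw [lstar_diff i j hi a h p hph]
    unfold Cfun
    rw [sumC_zero i j hi a p]
    have hpnot : p ∉ Finset.Ici h := by
      simp only [Finset.mem_Ici, Fin.le_def]
      omega
    have hins : Finset.Ici p = insert p (Finset.Ici h) := by
      ext x
      simp only [Finset.mem_insert, Finset.mem_Ici, Fin.le_def, Fin.ext_iff]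
      omega
    have hsum : ∑ l ∈ Finset.Ici p, (a (i l) : ℤ)
        = (a (i p) : ℤ) + ∑ l ∈ Finset.Ici h, (a (i l) : ℤ) := by
      rw [hins, Finset.sum_insert hpnot]
    rw [hsum]
    ring
end
end
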